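/- Given cutoff thresholds c₀, ..., c_{t−1} ∈ ℝ, the minimizers of the summed KL divergence Σ_{τ=0}^{t−1} D_KL(H•(c_τ) || H(Ψ(μ₁, μ₂; γ); c_τ)) are μ₁* = μ₁• and μ₂* = (Σ_{τ=0}^{t−1} P[X₁ ≤ c_τ]·μ₂*(c_τ)) / (Σ_{τ=0}^{t−1} P[X₁ ≤ c_τ]), where μ₂*(c) = μ₂• − γ(μ₁• − E[X₁ | X₁ ≤ c]) is the single-cutoff pseudo-true fundamental. -/

import Mathlib

open MeasureTheory Set

/-- Gaussian density with mean `a` and variance `s2`. -/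
noncomputable def gauss (a s2 x : ℝ) : ℝ :=
  (Real.sqrt (2 * Real.pi * s2))⁻¹ * Real.exp (-(x - a) ^ 2 / (2 * s2))

/-- Mean of a `N(a, s2)` random variable truncated above at `c`, i.e. `E[X | X ≤ c]`. -/
noncomputable def truncMean (a s2 c : ℝ) : ℝ :=
  (∫ x in Iic c, x * gauss a s2 x) / (∫ x in Iic c, gauss a s2 x)

/-- KL divergence from the true censored history distribution to the subjective one
with fundamentals `μ1, μ2`, bias `γ`, censoring threshold `c`. -/
noncomputable def klObj (μ1b μ2b s2 γ c μ1 μ2 : ℝ) : ℝ :=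
  (∫ x in Ioi c, gauss μ1b s2 x * Real.log (gauss μ1b s2 x / gauss μ1 s2 x)) +
    ∫ x1 in Iic c, ∫ x2 : ℝ,
      gauss μ1b s2 x1 * gauss μ2b s2 x2 *
        Real.log (gauss μ1b s2 x1 * gauss μ2b s2 x2 /
          (gauss μ1 s2 x1 * gauss (μ2 - γ * (x1 - μ1)) s2 x2))

lemma gauss_pos {s2 : ℝ} (hs2 : 0 < s2) (a x : ℝ) : 0 < gauss a s2 x := by
  unfold gauss
  have h : 0 < Real.sqrt (2 * Real.pi * s2) := Real.sqrt_pos.2 (by positivity)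
  positivity

lemma log_gauss_div {s2 : ℝ} (hs2 : 0 < s2) (a a' x : ℝ) :
    Real.log (gauss a s2 x / gauss a' s2 x) = ((x - a')^2 - (x - a)^2) / (2*s2) := by
  unfold gauss
  have hC : (Real.sqrt (2 * Real.pi * s2))⁻¹ ≠ 0 := by
    have h : 0 < Real.sqrt (2 * Real.pi * s2) := Real.sqrt_pos.2 (by positivity)
    positivity
  rw [mul_div_mul_left _ _ hC, ← Real.exp_sub, Real.log_exp]
  field_simp
  ring

lemma gauss_eq_pdf {s2 : ℝ} (hs2 : 0 < s2) (a : ℝ) :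
    gauss a s2 = ProbabilityTheory.gaussianPDFReal a ⟨s2, hs2.le⟩ := rfl

lemma integrable_gauss {s2 : ℝ} (hs2 : 0 < s2) (a : ℝ) : Integrable (gauss a s2) := by
  rw [gauss_eq_pdf hs2]; exact ProbabilityTheory.integrable_gaussianPDFReal a _

lemma integral_gauss {s2 : ℝ} (hs2 : 0 < s2) (a : ℝ) : ∫ x, gauss a s2 x = 1 := by
  rw [gauss_eq_pdf hs2]
  refine ProbabilityTheory.integral_gaussianPDFReal_eq_one a ?_
  intro h
  exact hs2.ne' (congrArg NNReal.toReal h)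

lemma gauss_shift {s2 : ℝ} (a y : ℝ) :
    gauss a s2 (y + a) = (Real.sqrt (2 * Real.pi * s2))⁻¹ * Real.exp (-(2*s2)⁻¹ * y^2) := by
  unfold gauss
  congr 1
  congr 1
  rw [add_sub_cancel_right]
  ring

lemma integrable_sq_mul_exp {b : ℝ} (hb : 0 < b) :
    Integrable (fun y : ℝ => y^2 * Real.exp (-b * y^2)) := by
  have h := integrable_rpow_mul_exp_neg_mul_sq hb (s := 2) (by norm_num)
  have : ∀ y : ℝ, y ^ (2:ℝ) = y ^ 2 := fun y => by
    rw [show (2:ℝ) = ((2:ℕ):ℝ) by norm_num, Real.rpow_natCast]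
  simpa only [this] using h

lemma integrable_poly_gauss {s2 : ℝ} (hs2 : 0 < s2) (a p q r : ℝ) :
    Integrable (fun x : ℝ => (p + q*x + r*x^2) * gauss a s2 x) := by
  have hb : 0 < (2*s2)⁻¹ := by positivity
  set C := (Real.sqrt (2 * Real.pi * s2))⁻¹ with hC
  set f : ℝ → ℝ := fun y => (p + q*(y+a) + r*(y+a)^2) * gauss a s2 (y+a) with hf
  have h1 : Integrable (fun y : ℝ => Real.exp (-(2*s2)⁻¹ * y^2)) := integrable_exp_neg_mul_sq hb
  have h2 : Integrable (fun y : ℝ => y * Real.exp (-(2*s2)⁻¹ * y^2)) :=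
    integrable_mul_exp_neg_mul_sq hb
  have h3 : Integrable (fun y : ℝ => y^2 * Real.exp (-(2*s2)⁻¹ * y^2)) :=
    integrable_sq_mul_exp hb
  have hfi : Integrable f := by
    have : f = fun y => ((p + q*a + r*a^2)*C) * Real.exp (-(2*s2)⁻¹ * y^2)
        + ((q + 2*r*a)*C) * (y * Real.exp (-(2*s2)⁻¹ * y^2))
        + (r*C) * (y^2 * Real.exp (-(2*s2)⁻¹ * y^2)) := by
      funext y
      rw [hf]
      simp only [gauss_shift, ← hC]
      ring
    rw [this]
    exact ((h1.const_mul _).add (h2.const_mul _)).add (h3.const_mul _)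
  have := hfi.comp_add_right (-a)
  have heq : (fun x : ℝ => f (x + -a)) = fun x : ℝ => (p + q*x + r*x^2) * gauss a s2 x := by
    funext x
    rw [hf]
    simp only []
    rw [show x + -a + a = x by ring]
  rwa [heq] at this

lemma integral_odd_exp {b : ℝ} : ∫ y : ℝ, y * Real.exp (-b * y^2) = 0 := by
  have h := integral_neg_eq_self (fun y : ℝ => y * Real.exp (-b * y^2)) volume
  simp only [neg_sq, neg_mul] at h
  rw [integral_neg] at h
  simp only [neg_mul]
  linarith

lemma integral_linear_gauss {s2 : ℝ} (hs2 : 0 < s2) (a p q : ℝ) :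
    ∫ x, (p + q*x) * gauss a s2 x = p + q*a := by
  have hb : 0 < (2*s2)⁻¹ := by positivity
  set C := (Real.sqrt (2 * Real.pi * s2))⁻¹ with hC
  have key := integral_add_right_eq_self (μ := volume)
    (fun x : ℝ => (p + q*x) * gauss a s2 x) a
  rw [← key]
  have heq : (fun y : ℝ => (p + q*(y+a)) * gauss a s2 (y+a))
      = fun y : ℝ => (p + q*a) * gauss a s2 (y+a) + (q*C) * (y * Real.exp (-(2*s2)⁻¹ * y^2)) := by
    funext y
    rw [gauss_shift, ← hC]
    ring
  rw [heq, integral_add (((integrable_gauss hs2 a).comp_add_right a).const_mul _)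
      ((integrable_mul_exp_neg_mul_sq hb).const_mul _),
    integral_const_mul, integral_const_mul,
    integral_add_right_eq_self (gauss a s2) a, integral_gauss hs2, integral_odd_exp]
  ring

lemma inner_integral {s2 : ℝ} (hs2 : 0 < s2) (μ1b μ2b γ μ1 μ2 x1 : ℝ) :
    (∫ x2 : ℝ, gauss μ1b s2 x1 * gauss μ2b s2 x2 *
        Real.log (gauss μ1b s2 x1 * gauss μ2b s2 x2 /
          (gauss μ1 s2 x1 * gauss (μ2 - γ * (x1 - μ1)) s2 x2)))
      = gauss μ1b s2 x1 * (((x1 - μ1)^2 - (x1 - μ1b)^2)/(2*s2)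
          + ((μ2b - μ2 - γ*μ1) + γ*x1)^2/(2*s2)) := by
  have hs2' : s2 ≠ 0 := hs2.ne'
  set m := μ2 - γ * (x1 - μ1) with hm
  have hlog : ∀ x2 : ℝ,
      Real.log (gauss μ1b s2 x1 * gauss μ2b s2 x2 / (gauss μ1 s2 x1 * gauss m s2 x2))
        = ((x1 - μ1)^2 - (x1 - μ1b)^2)/(2*s2) + ((x2 - m)^2 - (x2 - μ2b)^2)/(2*s2) := by
    intro x2
    have hposa : 0 < gauss μ1b s2 x1 / gauss μ1 s2 x1 :=
      div_pos (gauss_pos hs2 _ _) (gauss_pos hs2 _ _)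
    have hposb : 0 < gauss μ2b s2 x2 / gauss m s2 x2 :=
      div_pos (gauss_pos hs2 _ _) (gauss_pos hs2 _ _)
    rw [show gauss μ1b s2 x1 * gauss μ2b s2 x2 / (gauss μ1 s2 x1 * gauss m s2 x2)
        = (gauss μ1b s2 x1 / gauss μ1 s2 x1) * (gauss μ2b s2 x2 / gauss m s2 x2) from
        (div_mul_div_comm _ _ _ _).symm,
      Real.log_mul hposa.ne' hposb.ne', log_gauss_div hs2, log_gauss_div hs2]
  have hcongr : (fun x2 : ℝ => gauss μ1b s2 x1 * gauss μ2b s2 x2 *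
        Real.log (gauss μ1b s2 x1 * gauss μ2b s2 x2 / (gauss μ1 s2 x1 * gauss m s2 x2)))
      = fun x2 : ℝ =>
        ((gauss μ1b s2 x1 * (((x1 - μ1)^2 - (x1 - μ1b)^2)/(2*s2))
            - gauss μ1b s2 x1 * (μ2b - m)*(m + μ2b)/(2*s2))
          + (gauss μ1b s2 x1 * (μ2b - m)/s2) * x2) * gauss μ2b s2 x2 := by
    funext x2
    rw [hlog x2]
    field_simp
    ring
  rw [hcongr, integral_linear_gauss hs2]
  rw [hm]
  field_simp
  ring

lemma klObj_eq {s2 : ℝ} (hs2 : 0 < s2) (μ1b μ2b γ c μ1 μ2 : ℝ) :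
    klObj μ1b μ2b s2 γ c μ1 μ2 =
      (μ1 - μ1b)^2/(2*s2) +
      ((μ2b - μ2 - γ*μ1)^2 * (∫ x in Iic c, gauss μ1b s2 x)
        + 2*(μ2b - μ2 - γ*μ1)*γ * (∫ x in Iic c, x * gauss μ1b s2 x)
        + γ^2 * (∫ x in Iic c, x^2 * gauss μ1b s2 x)) / (2*s2) := by
  have hs2' : s2 ≠ 0 := hs2.ne'
  set A := μ2b - μ2 - γ*μ1 with hA
  set p1 := (μ1^2 - μ1b^2)/(2*s2) with hp1
  set q1 := (μ1b - μ1)/s2 with hq1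
  set p2 := A^2/(2*s2) with hp2
  set q2 := A*γ/s2 with hq2
  set r2 := γ^2/(2*s2) with hr2
  have hlin : ∀ x : ℝ, gauss μ1b s2 x * (((x - μ1)^2 - (x - μ1b)^2)/(2*s2))
      = (p1 + q1*x + 0*x^2) * gauss μ1b s2 x := by
    intro x; rw [hp1, hq1]; field_simp; ring
  have hquad : ∀ x : ℝ, gauss μ1b s2 x * ((A + γ*x)^2/(2*s2))
      = (p2 + q2*x + r2*x^2) * gauss μ1b s2 x := by
    intro x; rw [hp2, hq2, hr2]; field_simp; ring
  have h1 : klObj μ1b μ2b s2 γ c μ1 μ2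
      = (∫ x in Ioi c, (p1 + q1*x + 0*x^2) * gauss μ1b s2 x)
        + ∫ x1 in Iic c, ((p1 + q1*x1 + 0*x1^2) * gauss μ1b s2 x1
            + (p2 + q2*x1 + r2*x1^2) * gauss μ1b s2 x1) := by
    unfold klObj
    congr 1
    · refine integral_congr_ae (Filter.Eventually.of_forall fun x => ?_)
      beta_reduce
      rw [log_gauss_div hs2, hlin x]
    · refine integral_congr_ae (Filter.Eventually.of_forall fun x1 => ?_)
      beta_reduce
      rw [inner_integral hs2, ← hA, mul_add, hlin x1, hquad x1]
  rw [h1, integral_add ((integrable_poly_gauss hs2 _ _ _ _).integrableOn)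
      ((integrable_poly_gauss hs2 _ _ _ _).integrableOn)]
  have hsplit : (∫ x in Iic c, (p1 + q1*x + 0*x^2) * gauss μ1b s2 x)
      + (∫ x in Ioi c, (p1 + q1*x + 0*x^2) * gauss μ1b s2 x)
      = ∫ x, (p1 + q1*x + 0*x^2) * gauss μ1b s2 x :=
    intervalIntegral.integral_Iic_add_Ioi ((integrable_poly_gauss hs2 _ _ _ _).integrableOn)
      ((integrable_poly_gauss hs2 _ _ _ _).integrableOn)
  have hfull : ∫ x, (p1 + q1*x + 0*x^2) * gauss μ1b s2 x = p1 + q1*μ1b := by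
    have : (fun x : ℝ => (p1 + q1*x + 0*x^2) * gauss μ1b s2 x)
        = fun x : ℝ => (p1 + q1*x) * gauss μ1b s2 x := by funext x; ring
    rw [this, integral_linear_gauss hs2]
  have hquadint : (∫ x in Iic c, (p2 + q2*x + r2*x^2) * gauss μ1b s2 x)
      = p2 * (∫ x in Iic c, gauss μ1b s2 x) + q2 * (∫ x in Iic c, x * gauss μ1b s2 x)
        + r2 * (∫ x in Iic c, x^2 * gauss μ1b s2 x) := by
    have e1 : (fun x : ℝ => (p2 + q2*x + r2*x^2) * gauss μ1b s2 x)
        = fun x : ℝ => (p2 + 0*x + 0*x^2) * gauss μ1b s2 x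
            + ((0 + q2*x + 0*x^2) * gauss μ1b s2 x
              + (0 + 0*x + r2*x^2) * gauss μ1b s2 x) := by funext x; ring
    have hadd : Integrable (fun x : ℝ => (0 + q2*x + 0*x^2) * gauss μ1b s2 x
        + (0 + 0*x + r2*x^2) * gauss μ1b s2 x) :=
      (integrable_poly_gauss hs2 _ _ _ _).add (integrable_poly_gauss hs2 _ _ _ _)
    rw [e1, integral_add ((integrable_poly_gauss hs2 _ _ _ _).integrableOn)
        hadd.integrableOn,
      integral_add ((integrable_poly_gauss hs2 _ _ _ _).integrableOn)
        ((integrable_poly_gauss hs2 _ _ _ _).integrableOn)]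
    rw [show (fun x : ℝ => (p2 + 0*x + 0*x^2) * gauss μ1b s2 x)
          = fun x : ℝ => p2 * gauss μ1b s2 x from funext fun x => by ring,
        show (fun x : ℝ => (0 + q2*x + 0*x^2) * gauss μ1b s2 x)
          = fun x : ℝ => q2 * (x * gauss μ1b s2 x) from funext fun x => by ring,
        show (fun x : ℝ => (0 + 0*x + r2*x^2) * gauss μ1b s2 x)
          = fun x : ℝ => r2 * (x^2 * gauss μ1b s2 x) from funext fun x => by ring,
        integral_const_mul, integral_const_mul, integral_const_mul]
    ring
  calc (∫ x in Ioi c, (p1 + q1*x + 0*x^2) * gauss μ1b s2 x)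
        + ((∫ x in Iic c, (p1 + q1*x + 0*x^2) * gauss μ1b s2 x)
          + ∫ x in Iic c, (p2 + q2*x + r2*x^2) * gauss μ1b s2 x)
      = (p1 + q1*μ1b) + ((∫ x in Iic c, (p2 + q2*x + r2*x^2) * gauss μ1b s2 x)) := by
        rw [← hfull, ← hsplit]; ring
    _ = (μ1 - μ1b)^2/(2*s2) +
      (A^2 * (∫ x in Iic c, gauss μ1b s2 x)
        + 2*A*γ * (∫ x in Iic c, x * gauss μ1b s2 x)
        + γ^2 * (∫ x in Iic c, x^2 * gauss μ1b s2 x)) / (2*s2) := by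
        rw [hquadint, hp1, hq1, hp2, hq2, hr2]
        field_simp
        ring

lemma setIntegral_gauss_pos {s2 : ℝ} (hs2 : 0 < s2) (a c : ℝ) :
    0 < ∫ x in Iic c, gauss a s2 x := by
  rw [setIntegral_pos_iff_support_of_nonneg_ae
    (Filter.Eventually.of_forall fun x => (gauss_pos hs2 a x).le)
    ((integrable_gauss hs2 a).integrableOn)]
  have hsupp : Function.support (gauss a s2) = univ := by
    ext x; simp [(gauss_pos hs2 a x).ne']
  rw [hsupp, univ_inter, Real.volume_Iic]
  simp

/-- Given cutoffs `c₀,…,c_{t−1}`, the minimizers of the summed KL divergence are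
`μ₁* = μ₁•` and `μ₂*` equal to the `P[X₁ ≤ c_τ]`-weighted average of the single-cutoff
pseudo-true fundamentals `μ₂*(c_τ) = μ₂• − γ(μ₁• − E[X₁ | X₁ ≤ c_τ])`. -/
theorem large_generations_pseudo_true (μ1b μ2b s2 γ : ℝ) (hs2 : 0 < s2) (hγ : 0 < γ)
    (t : ℕ) (ht : 0 < t) (c : Fin t → ℝ) :
    ∀ μ1 μ2 : ℝ,
      (∀ μ1' μ2' : ℝ,
          ∑ τ, klObj μ1b μ2b s2 γ (c τ) μ1 μ2 ≤ ∑ τ, klObj μ1b μ2b s2 γ (c τ) μ1' μ2') →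
      μ1 = μ1b ∧
        μ2 = (∑ τ, (∫ x in Iic (c τ), gauss μ1b s2 x) *
                (μ2b - γ * (μ1b - truncMean μ1b s2 (c τ)))) /
              ∑ τ, ∫ x in Iic (c τ), gauss μ1b s2 x := by
  intro μ1 μ2 h
  have hs2' : s2 ≠ 0 := hs2.ne'
  have htR : (0:ℝ) < t := by exact_mod_cast ht
  haveI : NeZero t := ⟨ht.ne'⟩
  have hPpos : ∀ τ : Fin t, 0 < ∫ x in Iic (c τ), gauss μ1b s2 x :=
    fun τ => setIntegral_gauss_pos hs2 _ _
  set SP := ∑ τ : Fin t, ∫ x in Iic (c τ), gauss μ1b s2 x with hSP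
  set SM := ∑ τ : Fin t, ∫ x in Iic (c τ), x * gauss μ1b s2 x with hSM
  set SS := ∑ τ : Fin t, ∫ x in Iic (c τ), x^2 * gauss μ1b s2 x with hSS
  have hSPpos : 0 < SP := by
    rw [hSP]
    exact Finset.sum_pos (fun τ _ => hPpos τ) Finset.univ_nonempty
  have hSP0 : SP ≠ 0 := hSPpos.ne'
  have hsum : ∀ μ1' μ2' : ℝ, ∑ τ, klObj μ1b μ2b s2 γ (c τ) μ1' μ2'
      = (t : ℝ) * ((μ1' - μ1b)^2/(2*s2))
        + ((μ2b - μ2' - γ*μ1')^2 * SP + 2*(μ2b - μ2' - γ*μ1')*γ * SM + γ^2 * SS) / (2*s2) := by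
    intro μ1' μ2'
    rw [Finset.sum_congr rfl fun τ _ => klObj_eq hs2 μ1b μ2b γ (c τ) μ1' μ2']
    rw [Finset.sum_add_distrib, Finset.sum_const, Finset.card_univ, Fintype.card_fin,
      nsmul_eq_mul, ← Finset.sum_div, Finset.sum_add_distrib, Finset.sum_add_distrib,
      ← Finset.mul_sum, ← Finset.mul_sum, ← Finset.mul_sum, ← hSP, ← hSM, ← hSS]
  specialize h μ1b (μ2b - γ*μ1b + γ * SM / SP)
  rw [hsum μ1 μ2, hsum _ _] at h
  have hA2 : μ2b - (μ2b - γ*μ1b + γ * SM / SP) - γ*μ1b = -(γ*SM/SP) := by ring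
  rw [hA2] at h
  have hkey : (t:ℝ) * (μ1 - μ1b)^2 * SP
      + ((μ2b - μ2 - γ*μ1)*SP + γ*SM)^2 ≤ 0 := by
    have h2s2 : (0:ℝ) < 2*s2 := by linarith
    have hh : (t : ℝ) * ((μ1 - μ1b)^2/(2*s2))
        + ((μ2b - μ2 - γ*μ1)^2 * SP + 2*(μ2b - μ2 - γ*μ1)*γ * SM + γ^2 * SS) / (2*s2)
        ≤ (t : ℝ) * ((μ1b - μ1b)^2/(2*s2))
          + ((-(γ*SM/SP))^2 * SP + 2*(-(γ*SM/SP))*γ * SM + γ^2 * SS) / (2*s2) := h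
    rw [← mul_div_assoc, ← mul_div_assoc, ← add_div, ← add_div,
      div_le_div_iff_of_pos_right h2s2] at hh
    have hh2 : (t:ℝ) * (μ1 - μ1b)^2
        + ((μ2b - μ2 - γ*μ1)^2 * SP + 2*(μ2b - μ2 - γ*μ1)*γ * SM + γ^2 * SS)
        ≤ γ^2*SS - γ^2*SM^2/SP := by
      have e : (t : ℝ) * (μ1b - μ1b)^2
          + ((-(γ*SM/SP))^2 * SP + 2*(-(γ*SM/SP))*γ * SM + γ^2 * SS)
          = γ^2*SS - γ^2*SM^2/SP := by
        field_simp
        ring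
      linarith [hh, e.le, e.ge]
    have hh3 : ((t:ℝ) * (μ1 - μ1b)^2
        + ((μ2b - μ2 - γ*μ1)^2 * SP + 2*(μ2b - μ2 - γ*μ1)*γ * SM + γ^2 * SS)) * SP
        ≤ (γ^2*SS - γ^2*SM^2/SP) * SP :=
      mul_le_mul_of_nonneg_right hh2 hSPpos.le
    have e2 : (γ^2*SS - γ^2*SM^2/SP) * SP = γ^2*SS*SP - γ^2*SM^2 := by
      field_simp
    nlinarith [hh3, e2]
  have hu : μ1 = μ1b := by
    have hu2 : (μ1 - μ1b)^2 ≤ 0 := by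
      nlinarith [sq_nonneg ((μ2b - μ2 - γ*μ1)*SP + γ*SM), mul_pos htR hSPpos]
    have := le_antisymm hu2 (sq_nonneg _)
    have := pow_eq_zero_iff (n := 2) (by norm_num) |>.mp this
    linarith
  refine ⟨hu, ?_⟩
  have hv : (μ2b - μ2 - γ*μ1)*SP + γ*SM = 0 := by
    have hv2 : ((μ2b - μ2 - γ*μ1)*SP + γ*SM)^2 ≤ 0 := by
      have hnn : 0 ≤ (t:ℝ) * (μ1 - μ1b)^2 * SP :=
        mul_nonneg (mul_nonneg htR.le (sq_nonneg _)) hSPpos.le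
      linarith [hkey]
    have := le_antisymm hv2 (sq_nonneg _)
    exact pow_eq_zero_iff (n := 2) (by norm_num) |>.mp this
  have htarget : (∑ τ, (∫ x in Iic (c τ), gauss μ1b s2 x) *
          (μ2b - γ * (μ1b - truncMean μ1b s2 (c τ))))
      = (μ2b - γ*μ1b) * SP + γ * SM := by
    have e : ∀ τ : Fin t, (∫ x in Iic (c τ), gauss μ1b s2 x) *
          (μ2b - γ * (μ1b - truncMean μ1b s2 (c τ)))
        = (μ2b - γ*μ1b) * (∫ x in Iic (c τ), gauss μ1b s2 x)
          + γ * (∫ x in Iic (c τ), x * gauss μ1b s2 x) := by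
      intro τ
      unfold truncMean
      field_simp [(hPpos τ).ne']
      ring
    rw [Finset.sum_congr rfl fun τ _ => e τ, Finset.sum_add_distrib,
      ← Finset.mul_sum, ← Finset.mul_sum, ← hSP, ← hSM]
  rw [htarget]
  rw [hu] at hv
  field_simp
  linear_combination -hv
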